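/- Let λ₁,…,λ_N be distinct complex numbers with λ_i − λ_j ≠ 1 for all i ≠ j, and μ₁,…,μ_N nonzero complex numbers. Then the N×N matrix X with entries X_{ij} = μ_i μ_j / (1 + λ_j − λ_i) has determinant det(X) = ∏_{i=1}^N μ_i² · ∏_{1≤i<j≤N} (1 − 1/(1 − (λ_i − λ_j)²)), and in particular X is invertible. -/

import Mathlib

set_option linter.unnecessarySeqFocus false
open Matrix Finset

private lemma pairs_eq_Ioi {M : Type*} [CommMonoid M] {n : ℕ} (f : Fin n → Fin n → M) :
    ∏ p ∈ Finset.univ.filter (fun p : Fin n × Fin n => p.1 < p.2), f p.1 p.2 =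
      ∏ i, ∏ j ∈ Finset.Ioi i, f i j := by
  rw [Finset.prod_sigma']
  exact Finset.prod_bij' (fun p _ => ⟨p.1, p.2⟩) (fun s _ => (s.1, s.2))
    (by simp) (by simp) (by simp) (by simp) (by simp)

private lemma cauchy_aux (n : ℕ) : ∀ (x y : Fin n → ℂ), (∀ i j, x i + y j ≠ 0) →
    Matrix.det (Matrix.of fun i j => (x i + y j)⁻¹) =
      (∏ i, (x i + y i)⁻¹) *
        ∏ i, ∏ j ∈ Finset.Ioi i, ((x j - x i) * (y j - y i) / ((x i + y j) * (x j + y i))) := by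
  induction n with
  | zero => intro x y _; simp
  | succ n ih =>
    intro x y hxy
    -- Step 1: subtract row 0 from every other row
    have h1 : Matrix.det (Matrix.of fun i j : Fin (n+1) => (x i + y j)⁻¹) =
        Matrix.det (Matrix.of fun i j : Fin (n+1) =>
          (Fin.cons (fun j : Fin (n+1) => (x 0 + y j)⁻¹)
            (fun i' j => (x 0 - x i'.succ) * ((x i'.succ + y j)⁻¹ * (x 0 + y j)⁻¹)) :
              Fin (n+1) → Fin (n+1) → ℂ) i j) := by
      refine Matrix.det_eq_of_forall_row_eq_smul_add_const (Fin.cons 0 1) 0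
        (Fin.cons_zero _ _) ?_
      intro i j
      refine Fin.cases ?_ (fun i' => ?_) i
      · simp
      · simp only [Matrix.of_apply, Fin.cons_succ, Fin.cons_zero, Pi.one_apply, one_mul]
        have ha := hxy i'.succ j
        have hb := hxy 0 j
        field_simp
        ring
    -- Step 2: factor (x 0 + y j)⁻¹ out of column j
    have h2 : Matrix.det (Matrix.of fun i j : Fin (n+1) =>
          (Fin.cons (fun j : Fin (n+1) => (x 0 + y j)⁻¹)
            (fun i' j => (x 0 - x i'.succ) * ((x i'.succ + y j)⁻¹ * (x 0 + y j)⁻¹)) :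
              Fin (n+1) → Fin (n+1) → ℂ) i j) =
        (∏ j : Fin (n+1), (x 0 + y j)⁻¹) *
          Matrix.det (Matrix.of fun i j : Fin (n+1) =>
            (Fin.cons (1 : ℂ) (fun i' => (x 0 - x i'.succ) * (x i'.succ + y j)⁻¹) : Fin (n+1) → ℂ) i) := by
      rw [← Matrix.det_mul_row]
      congr 1
      ext i j
      refine Fin.cases ?_ (fun i' => ?_) i <;> simp <;> ring
    -- Step 3: factor (x 0 - x i'.succ) out of row i'.succ
    have h3 : Matrix.det (Matrix.of fun i j : Fin (n+1) =>
          (Fin.cons (1 : ℂ) (fun i' => (x 0 - x i'.succ) * (x i'.succ + y j)⁻¹) : Fin (n+1) → ℂ) i) =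
        (∏ i' : Fin n, (x 0 - x i'.succ)) *
          Matrix.det (Matrix.of fun i j : Fin (n+1) =>
            (Fin.cons (1 : ℂ) (fun i' => (x i'.succ + y j)⁻¹) : Fin (n+1) → ℂ) i) := by
      have hmc := Matrix.det_mul_column (Fin.cons (1 : ℂ) (fun i' => x 0 - x i'.succ))
        (Matrix.of fun i j : Fin (n+1) =>
          (Fin.cons (1 : ℂ) (fun i' => (x i'.succ + y j)⁻¹) : Fin (n+1) → ℂ) i)
      rw [Fin.prod_cons, one_mul] at hmc
      rw [← hmc]
      congr 1
      ext i j
      refine Fin.cases ?_ (fun i' => ?_) i <;> simp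
    -- transpose
    have h4 : Matrix.det (Matrix.of fun i j : Fin (n+1) =>
          (Fin.cons (1 : ℂ) (fun i' => (x i'.succ + y j)⁻¹) : Fin (n+1) → ℂ) i) =
        Matrix.det (Matrix.of fun j i : Fin (n+1) =>
          (Fin.cons (1 : ℂ) (fun i' => (x i'.succ + y j)⁻¹) : Fin (n+1) → ℂ) i) := by
      rw [← Matrix.det_transpose]
      congr 1
    -- Step 4: subtract row 0 (of the transpose) from every other row
    have h5 : Matrix.det (Matrix.of fun j i : Fin (n+1) =>
          (Fin.cons (1 : ℂ) (fun i' => (x i'.succ + y j)⁻¹) : Fin (n+1) → ℂ) i) =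
        Matrix.det (Matrix.of fun j i : Fin (n+1) =>
          (Fin.cons (fun i : Fin (n+1) => (Fin.cons (1 : ℂ) (fun i' => (x i'.succ + y 0)⁻¹) : Fin (n+1) → ℂ) i)
            (fun j' i => (Fin.cons (0 : ℂ)
              (fun i' => (y 0 - y j'.succ) * ((x i'.succ + y j'.succ)⁻¹ * (x i'.succ + y 0)⁻¹)) :
                Fin (n+1) → ℂ) i) : Fin (n+1) → Fin (n+1) → ℂ) j i) := by
      refine Matrix.det_eq_of_forall_row_eq_smul_add_const (Fin.cons 0 1) 0
        (Fin.cons_zero _ _) ?_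
      intro j i
      refine Fin.cases ?_ (fun j' => ?_) j
      · simp
      · refine Fin.cases ?_ (fun i' => ?_) i
        · simp
        · simp only [Matrix.of_apply, Fin.cons_succ, Fin.cons_zero, Pi.one_apply, one_mul]
          have ha := hxy i'.succ j'.succ
          have hb := hxy i'.succ 0
          field_simp
          ring
    -- Step 5: expand along column 0
    have h6 : Matrix.det (Matrix.of fun j i : Fin (n+1) =>
          (Fin.cons (fun i : Fin (n+1) => (Fin.cons (1 : ℂ) (fun i' => (x i'.succ + y 0)⁻¹) : Fin (n+1) → ℂ) i)
            (fun j' i => (Fin.cons (0 : ℂ)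
              (fun i' => (y 0 - y j'.succ) * ((x i'.succ + y j'.succ)⁻¹ * (x i'.succ + y 0)⁻¹)) :
                Fin (n+1) → ℂ) i) : Fin (n+1) → Fin (n+1) → ℂ) j i) =
        Matrix.det (Matrix.of fun j' i' : Fin n =>
          (y 0 - y j'.succ) * ((x i'.succ + y j'.succ)⁻¹ * (x i'.succ + y 0)⁻¹)) := by
      rw [Matrix.det_succ_column_zero, Fin.sum_univ_succ]
      simp [Matrix.submatrix]
    -- Step 6: factor out of rows and columns
    have h7 : Matrix.det (Matrix.of fun j' i' : Fin n =>
          (y 0 - y j'.succ) * ((x i'.succ + y j'.succ)⁻¹ * (x i'.succ + y 0)⁻¹)) =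
        (∏ i' : Fin n, (x i'.succ + y 0)⁻¹) * ((∏ j' : Fin n, (y 0 - y j'.succ)) *
          Matrix.det (Matrix.of fun j' i' : Fin n => (x i'.succ + y j'.succ)⁻¹)) := by
      have s1 := Matrix.det_mul_column (fun j' : Fin n => (y 0 - y j'.succ))
        (Matrix.of fun j' i' : Fin n => (x i'.succ + y j'.succ)⁻¹)
      have s2 := Matrix.det_mul_row (fun i' : Fin n => (x i'.succ + y 0)⁻¹)
        (Matrix.of fun j' i' : Fin n => (y 0 - y j'.succ) * (x i'.succ + y j'.succ)⁻¹)
      calc Matrix.det (Matrix.of fun j' i' : Fin n =>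
            (y 0 - y j'.succ) * ((x i'.succ + y j'.succ)⁻¹ * (x i'.succ + y 0)⁻¹))
          = Matrix.det (Matrix.of fun j' i' : Fin n => (x i'.succ + y 0)⁻¹ *
              ((Matrix.of fun j' i' : Fin n =>
                (y 0 - y j'.succ) * (x i'.succ + y j'.succ)⁻¹) j' i')) := by
            congr 1; ext j' i'; simp only [Matrix.of_apply]; ring
        _ = _ := by
            simp only [Matrix.of_apply] at s1 s2 ⊢
            rw [s2, s1]
    have h8 : Matrix.det (Matrix.of fun j' i' : Fin n => (x i'.succ + y j'.succ)⁻¹) =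
        Matrix.det (Matrix.of fun i' j' : Fin n =>
          ((x ∘ Fin.succ) i' + (y ∘ Fin.succ) j')⁻¹) := by
      rw [← Matrix.det_transpose]
      congr 1
    have hih := ih (x ∘ Fin.succ) (y ∘ Fin.succ) (fun i j => hxy i.succ j.succ)
    rw [h1, h2, h3, h4, h5, h6, h7, h8, hih]
    -- assembly
    rw [Fin.prod_univ_succ (fun i : Fin (n+1) => (x i + y i)⁻¹),
      Fin.prod_univ_succ (fun i : Fin (n+1) =>
        ∏ j ∈ Finset.Ioi i, ((x j - x i) * (y j - y i) / ((x i + y j) * (x j + y i)))),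
      Fin.prod_Ioi_zero, Fin.prod_univ_succ (fun j : Fin (n+1) => (x 0 + y j)⁻¹)]
    simp only [Fin.prod_Ioi_succ, Function.comp_apply]
    have key : (∏ j' : Fin n, (x 0 + y j'.succ)⁻¹) * ((∏ i' : Fin n, (x 0 - x i'.succ)) *
        ((∏ i' : Fin n, (x i'.succ + y 0)⁻¹) * (∏ j' : Fin n, (y 0 - y j'.succ)))) =
        ∏ j' : Fin n, ((x j'.succ - x 0) * (y j'.succ - y 0) /
          ((x 0 + y j'.succ) * (x j'.succ + y 0))) := by
      rw [← Finset.prod_mul_distrib, ← Finset.prod_mul_distrib, ← Finset.prod_mul_distrib]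
      refine Finset.prod_congr rfl fun j' _ => ?_
      have ha := hxy 0 j'.succ
      have hb := hxy j'.succ 0
      field_simp
      ring
    rw [← key]
    ring

theorem cauchy_det_trig {N : ℕ} (l m : Fin N → ℂ)
    (hl : Function.Injective l)
    (hl1 : ∀ i j, i ≠ j → l i - l j ≠ 1)
    (hm : ∀ i, m i ≠ 0)
    (X : Matrix (Fin N) (Fin N) ℂ)
    (hX : ∀ i j, X i j = m i * m j / (1 + l j - l i)) :
    X.det = (∏ i, (m i) ^ 2) *
      ∏ p ∈ Finset.univ.filter (fun p : Fin N × Fin N => p.1 < p.2),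
        (1 - 1 / (1 - (l p.1 - l p.2) ^ 2)) ∧ IsUnit X.det := by
  set x : Fin N → ℂ := fun i => -(l i) with hx
  set y : Fin N → ℂ := fun j => 1 + l j with hy
  have hxy : ∀ i j, x i + y j ≠ 0 := by
    intro i j
    by_cases hij : i = j
    · subst hij; simp [hx, hy]
    · intro h
      apply hl1 i j hij
      simp only [hx, hy] at h
      linear_combination -h
  have hXeq : X = Matrix.of fun i j =>
      m i * ((Matrix.of fun i j => m j * ((Matrix.of fun i j => (x i + y j)⁻¹) i j)) i j) := by
    ext i j
    rw [hX]
    have h1 : 1 + l j - l i = x i + y j := by simp [hx, hy]; ring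
    rw [h1, div_eq_mul_inv, mul_assoc]
    simp
  have hdet : X.det = (∏ i, (m i) ^ 2) *
      ∏ p ∈ Finset.univ.filter (fun p : Fin N × Fin N => p.1 < p.2),
        (1 - 1 / (1 - (l p.1 - l p.2) ^ 2)) := by
    rw [hXeq, Matrix.det_mul_column m, Matrix.det_mul_row m, cauchy_aux N x y hxy]
    have hdiag : (∏ i, (x i + y i)⁻¹) = 1 := by
      refine Finset.prod_eq_one fun i _ => ?_
      simp [hx, hy]
    have hpairs : (∏ i, ∏ j ∈ Finset.Ioi i,
        ((x j - x i) * (y j - y i) / ((x i + y j) * (x j + y i)))) =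
        ∏ p ∈ Finset.univ.filter (fun p : Fin N × Fin N => p.1 < p.2),
          (1 - 1 / (1 - (l p.1 - l p.2) ^ 2)) := by
      rw [pairs_eq_Ioi (fun i j => (1 - 1 / (1 - (l i - l j) ^ 2)))]
      refine Finset.prod_congr rfl fun i _ => Finset.prod_congr rfl fun j hj => ?_
      have hij : i ≠ j := (Finset.mem_Ioi.mp hj).ne
      have ha := hxy i j
      have hb := hxy j i
      have hprod : (x i + y j) * (x j + y i) = 1 - (l i - l j) ^ 2 := by
        simp only [hx, hy]; ring
      have hne : (1 : ℂ) - (l i - l j) ^ 2 ≠ 0 := hprod ▸ mul_ne_zero ha hb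
      rw [div_eq_iff (mul_ne_zero ha hb)]
      simp only [hx, hy]
      field_simp
      ring
    rw [hdiag, hpairs, one_mul]
    have : (∏ i, m i ^ 2) = (∏ i, m i) * ∏ i, m i := by
      rw [← Finset.prod_mul_distrib]; exact Finset.prod_congr rfl fun i _ => sq (m i)
    rw [this]; ring
  refine ⟨hdet, ?_⟩
  rw [hdet, isUnit_iff_ne_zero]
  refine mul_ne_zero ?_ ?_
  · exact Finset.prod_ne_zero_iff.mpr fun i _ => pow_ne_zero _ (hm i)
  · refine Finset.prod_ne_zero_iff.mpr fun p hp => ?_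
    have hij : p.1 ≠ p.2 := (Finset.mem_filter.mp hp).2.ne
    have ha := hxy p.1 p.2
    have hb := hxy p.2 p.1
    have hprod : (x p.1 + y p.2) * (x p.2 + y p.1) = 1 - (l p.1 - l p.2) ^ 2 := by
      simp only [hx, hy]; ring
    have hne : (1 : ℂ) - (l p.1 - l p.2) ^ 2 ≠ 0 := hprod ▸ mul_ne_zero ha hb
    have hd : l p.1 - l p.2 ≠ 0 := sub_ne_zero.mpr (fun h => hij (hl h))
    intro h
    apply hd
    have : (1 : ℂ) - 1 / (1 - (l p.1 - l p.2) ^ 2) =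
        -(l p.1 - l p.2) ^ 2 / (1 - (l p.1 - l p.2) ^ 2) := by
      field_simp
      ring
    rw [this, div_eq_zero_iff] at h
    rcases h with h | h
    · exact pow_eq_zero_iff two_ne_zero |>.mp (neg_eq_zero.mp h)
    · exact absurd h hne
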